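/- Assume that either char k = 2 or every |x_i| is even, so that R^e is a free right R-module with basis 𝔠 = {y_1^{l_1} y_2^{l_2} ... y_n^{l_n} : l_r ≥ 0}. For any exponents j_1, ..., j_n ≥ 0 and i_1, ..., i_n ≥ 0, write the element z = y_1^{j_1} y_2^{j_2} ... y_n^{j_n} h_R(x_1^{i_1} x_2^{i_2} ... x_n^{i_n}) of R^e uniquely as z = Σ_{Y in 𝔠} Y a_Y with a_Y in R. Then a_1 = 0, i.e. the coefficient of the empty monomial 1 in this expansion is zero. -/

import Mathlib

noncomputable section

open scoped DirectSum

/-- The sign `(-1)^m`, as an integer, for `m : ℤ`. -/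
def sgn (m : ℤ) : ℤ := (Int.negOnePow m : ℤ)

/-- A differential graded Poisson algebra structure on a `ℤ`-graded `k`-algebra `A`,
whose grading is given by `𝒜`. -/
structure DGPoissonAlgebra (k : Type) [Field k] (A : Type) [Ring A] [Algebra k A]
    (𝒜 : ℤ → Submodule k A) : Type where
  /-- the Poisson bracket -/
  br : A →ₗ[k] A →ₗ[k] A
  /-- the differential -/
  d : A →ₗ[k] A
  br_mem : ∀ ⦃i j : ℤ⦄ ⦃a b : A⦄, a ∈ 𝒜 i → b ∈ 𝒜 j → br a b ∈ 𝒜 (i + j)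
  d_mem : ∀ ⦃i : ℤ⦄ ⦃a : A⦄, a ∈ 𝒜 i → d a ∈ 𝒜 (i + 1)
  antisymm : ∀ ⦃i j : ℤ⦄ ⦃a b : A⦄, a ∈ 𝒜 i → b ∈ 𝒜 j →
    br a b = -(sgn (i * j) • br b a)
  jacobi : ∀ ⦃i j l : ℤ⦄ ⦃a b c : A⦄, a ∈ 𝒜 i → b ∈ 𝒜 j → c ∈ 𝒜 l →
    br a (br b c) = br (br a b) c + sgn (i * j) • br b (br a c)
  gcomm : ∀ ⦃i j : ℤ⦄ ⦃a b : A⦄, a ∈ 𝒜 i → b ∈ 𝒜 j → a * b = sgn (i * j) • (b * a)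
  leibniz : ∀ ⦃i j l : ℤ⦄ ⦃a b c : A⦄, a ∈ 𝒜 i → b ∈ 𝒜 j → c ∈ 𝒜 l →
    br a (b * c) = br a b * c + sgn (i * j) • (b * br a c)
  d_sq : ∀ a : A, d (d a) = 0
  d_br : ∀ ⦃i j : ℤ⦄ ⦃a b : A⦄, a ∈ 𝒜 i → b ∈ 𝒜 j →
    d (br a b) = br (d a) b + sgn i • br a (d b)
  d_mul : ∀ ⦃i j : ℤ⦄ ⦃a b : A⦄, a ∈ 𝒜 i → b ∈ 𝒜 j →
    d (a * b) = d a * b + sgn i • (a * d b)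

/-- A differential graded algebra structure (i.e. a differential) on a `ℤ`-graded
`k`-algebra `B` with grading `ℬ`. -/
structure DGAlgebra (k : Type) [Field k] (B : Type) [Ring B] [Algebra k B]
    (ℬ : ℤ → Submodule k B) : Type where
  /-- the differential -/
  d : B →ₗ[k] B
  d_mem : ∀ ⦃i : ℤ⦄ ⦃b : B⦄, b ∈ ℬ i → d b ∈ ℬ (i + 1)
  d_sq : ∀ b : B, d (d b) = 0
  d_mul : ∀ ⦃i j : ℤ⦄ ⦃a b : B⦄, a ∈ ℬ i → b ∈ ℬ j →
    d (a * b) = d a * b + sgn i • (a * d b)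

/-- `f` is a DG algebra map: a degree-`0` algebra map commuting with the differentials. -/
structure IsDGAlgebraMap (k : Type) [Field k] {A B : Type} [Ring A] [Algebra k A]
    [Ring B] [Algebra k B] (𝒜 : ℤ → Submodule k A) (ℬ : ℤ → Submodule k B)
    (dA : A →ₗ[k] A) (dB : B →ₗ[k] B) (f : A →ₐ[k] B) : Prop where
  map_mem : ∀ ⦃i : ℤ⦄ ⦃a : A⦄, a ∈ 𝒜 i → f a ∈ ℬ i
  map_d : ∀ a : A, f (dA a) = dB (f a)

/-- The compatibility conditions satisfied by a pair `(f, g)` from a DG Poisson algebra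
`A` to a DG algebra `B`: `f` is a DG algebra map, `g` is a degree-`0` `k`-linear map
commuting with the differentials which is a graded Lie algebra map into `B` with the
graded commutator, and the two mixed identities hold. -/
def UEACompat (k : Type) [Field k] {A B : Type} [Ring A] [Algebra k A]
    [Ring B] [Algebra k B] (𝒜 : ℤ → Submodule k A) (ℬ : ℤ → Submodule k B)
    (P : DGPoissonAlgebra k A 𝒜) (dB : B →ₗ[k] B)
    (f : A →ₐ[k] B) (g : A →ₗ[k] B) : Prop :=
  IsDGAlgebraMap k 𝒜 ℬ P.d dB f ∧
  (∀ ⦃i : ℤ⦄ ⦃a : A⦄, a ∈ 𝒜 i → g a ∈ ℬ i) ∧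
  (∀ a : A, g (P.d a) = dB (g a)) ∧
  (∀ ⦃i j : ℤ⦄ ⦃a b : A⦄, a ∈ 𝒜 i → b ∈ 𝒜 j →
    g (P.br a b) = g a * g b - sgn (i * j) • (g b * g a)) ∧
  (∀ ⦃i j : ℤ⦄ ⦃a b : A⦄, a ∈ 𝒜 i → b ∈ 𝒜 j →
    f (P.br a b) = g a * f b - sgn (i * j) • (f b * g a)) ∧
  (∀ ⦃i j : ℤ⦄ ⦃a b : A⦄, a ∈ 𝒜 i → b ∈ 𝒜 j →
    g (a * b) = f a * g b + sgn (i * j) • (f b * g a))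

/-- `(E, α, β)` is a universal enveloping algebra of the DG Poisson algebra `A`. -/
def IsUEA (k : Type) [Field k] {A E : Type} [Ring A] [Algebra k A] [Ring E] [Algebra k E]
    (𝒜 : ℤ → Submodule k A) (ℰ : ℤ → Submodule k E)
    (P : DGPoissonAlgebra k A 𝒜) (DE : DGAlgebra k E ℰ)
    (α : A →ₐ[k] E) (β : A →ₗ[k] E) : Prop :=
  UEACompat k 𝒜 ℰ P DE.d α β ∧
  ∀ (D : Type) [Ring D] [Algebra k D] (𝒟 : ℤ → Submodule k D) [GradedAlgebra 𝒟]
    (dD : DGAlgebra k D 𝒟) (f : A →ₐ[k] D) (g : A →ₗ[k] D),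
    UEACompat k 𝒜 𝒟 P dD.d f g →
    ∃! φ : E →ₐ[k] D, IsDGAlgebraMap k ℰ 𝒟 DE.d dD.d φ ∧
      φ.comp α = f ∧ φ.toLinearMap.comp β = g

/-- The two-sided ideal of `F` generated by a set `S`, as a `k`-submodule. -/
def idealGen (k : Type) [Field k] {F : Type} [Ring F] [Algebra k F] (S : Set F) :
    Submodule k F :=
  Submodule.span k {z : F | ∃ u v : F, ∃ s ∈ S, z = u * s * v}

/-- The left ideal of `F` generated by a set `S`, as a `k`-submodule. -/
def leftIdealGen (k : Type) [Field k] {F : Type} [Ring F] [Algebra k F] (S : Set F) :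
    Submodule k F :=
  Submodule.span k {z : F | ∃ u : F, ∃ s ∈ S, z = u * s}

/-- A submodule is graded if it is spanned by its homogeneous elements. -/
def IsGradedSubmodule (k : Type) [Field k] {A : Type} [AddCommGroup A] [Module k A]
    (𝒜 : ℤ → Submodule k A) (M : Submodule k A) : Prop :=
  M ≤ Submodule.span k {a : A | a ∈ M ∧ ∃ i, a ∈ 𝒜 i}

/-- A `k`-submodule which is a two-sided ideal. -/
def IsTwoSidedIdealSub (k : Type) [Field k] {A : Type} [Ring A] [Algebra k A]
    (M : Submodule k A) : Prop :=
  ∀ r : A, ∀ m ∈ M, r * m ∈ M ∧ m * r ∈ M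

/-- A DG ideal: a graded two-sided ideal closed under the differential `d`. -/
def IsDGIdeal (k : Type) [Field k] {A : Type} [Ring A] [Algebra k A]
    (𝒜 : ℤ → Submodule k A) (d : A →ₗ[k] A) (M : Submodule k A) : Prop :=
  IsTwoSidedIdealSub k M ∧ IsGradedSubmodule k 𝒜 M ∧ ∀ m ∈ M, d m ∈ M

/-- A DG Poisson ideal: a DG ideal which is also closed under the Poisson bracket. -/
def IsDGPoissonIdeal (k : Type) [Field k] {A : Type} [Ring A] [Algebra k A]
    (𝒜 : ℤ → Submodule k A) (P : DGPoissonAlgebra k A 𝒜) (M : Submodule k A) : Prop :=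
  IsDGIdeal k 𝒜 P.d M ∧ ∀ a : A, ∀ m ∈ M, P.br a m ∈ M

/-- `π : A → B` presents `B` as the quotient of `A` by `I`. -/
structure IsQuotientBy (k : Type) [Field k] {A B : Type} [Ring A] [Algebra k A]
    [Ring B] [Algebra k B] (π : A →ₐ[k] B) (I : Submodule k A) : Prop where
  surj : Function.Surjective π
  ker : ∀ a : A, π a = 0 ↔ a ∈ I

/-- The (noncommutative, ordered) monomial `x 0 ^ e 0 * x 1 ^ e 1 * ⋯` . -/
def xMono {n : ℕ} {R : Type} [Ring R] (x : Fin n → R) (e : Fin n → ℕ) : R :=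
  ((List.finRange n).map fun r => x r ^ e r).prod

section Helpers

lemma sgn_smul_eq {k : Type} [Field k] {M : Type} [AddCommGroup M] [Module k M]
    {i : ℤ} (h : Even i ∨ ringChar k = 2) (j : ℤ) (z : M) : sgn (i * j) • z = z := by
  rcases h with h | h
  · have hs : sgn (i * j) = 1 := by
      unfold sgn; rw [Int.negOnePow_even _ (h.mul_right j)]; rfl
    rw [hs, one_smul]
  · rcases Int.even_or_odd (i * j) with he | ho
    · have hs : sgn (i * j) = 1 := by unfold sgn; rw [Int.negOnePow_even _ he]; rfl
      rw [hs, one_smul]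
    · have hs : sgn (i * j) = -1 := by unfold sgn; rw [Int.negOnePow_odd _ ho]; rfl
      rw [hs, neg_one_zsmul]
      have h2 : (2 : k) = 0 := by
        have : CharP k 2 := h ▸ ringChar.charP k
        exact_mod_cast CharP.cast_eq_zero k 2
      have hz : z + z = 0 := by rw [← two_smul k z, h2, zero_smul]
      exact add_eq_zero_iff_neg_eq.1 hz

lemma xMono_zero {n : ℕ} {R : Type} [Ring R] (v : Fin n → R) : xMono v 0 = 1 := by
  unfold xMono
  apply List.prod_eq_one
  intro z hz
  obtain ⟨r, _, rfl⟩ := List.mem_map.1 hz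
  simp

lemma xMono_split {n : ℕ} {R : Type} [Ring R] (v : Fin n → R) (l : Fin n → ℕ) (u : Fin n)
    (hmin : ∀ s, s < u → l s = 0) :
    xMono v l = v u ^ l u * xMono v (Function.update l u 0) := by
  classical
  unfold xMono
  have hlen : (List.finRange n).length = n := List.length_finRange
  have htd := (List.take_append_drop u.val (List.finRange n)).symm
  have hdrop : (List.finRange n).drop u.val = u :: (List.finRange n).drop (u.val + 1) := by
    rw [List.drop_eq_getElem_cons (by rw [hlen]; exact u.isLt)]
    congr 1
    rw [List.getElem_finRange]
    exact Fin.ext rfl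
  have htake : ∀ r ∈ (List.finRange n).take u.val, (r : Fin n) < u := by
    intro r hr
    obtain ⟨i, hi, rfl⟩ := List.mem_iff_getElem.1 hr
    have hi' : i < u.val := lt_of_lt_of_le hi (by simp [List.length_take])
    rw [List.getElem_take]
    rw [List.getElem_finRange]
    exact hi'
  have hdropgt : ∀ r ∈ (List.finRange n).drop (u.val + 1), u < (r : Fin n) := by
    intro r hr
    obtain ⟨i, hi, rfl⟩ := List.mem_iff_getElem.1 hr
    rw [List.getElem_drop]
    rw [List.getElem_finRange]
    show u.val < u.val + 1 + i
    omega
  conv_lhs => rw [htd]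
  conv_rhs => rw [htd]
  rw [hdrop]
  simp only [List.map_append, List.prod_append, List.map_cons, List.prod_cons]
  have hpre1 : ((List.finRange n).take u.val |>.map fun r => v r ^ l r).prod = 1 := by
    apply List.prod_eq_one; intro z hz
    obtain ⟨r, hr, rfl⟩ := List.mem_map.1 hz
    rw [hmin r (htake r hr), pow_zero]
  have hpre2 : ((List.finRange n).take u.val |>.map fun r => v r ^ (Function.update l u 0) r).prod = 1 := by
    apply List.prod_eq_one; intro z hz
    obtain ⟨r, hr, rfl⟩ := List.mem_map.1 hz
    rw [Function.update_of_ne (ne_of_lt (htake r hr)), hmin r (htake r hr), pow_zero]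
  have htail : ((List.finRange n).drop (u.val + 1) |>.map fun r => v r ^ (Function.update l u 0) r)
      = ((List.finRange n).drop (u.val + 1) |>.map fun r => v r ^ l r) := by
    apply List.map_congr_left
    intro r hr
    rw [Function.update_of_ne (ne_of_gt (hdropgt r hr))]
  rw [hpre1, hpre2, htail, Function.update_self, pow_zero, one_mul, one_mul, one_mul]

lemma xMono_cons {n : ℕ} {R : Type} [Ring R] (v : Fin n → R) (l : Fin n → ℕ) (u : Fin n)
    (hmin : ∀ s, s < u → l s = 0) (hpos : 0 < l u) :
    xMono v l = v u * xMono v (Function.update l u (l u - 1)) := by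
  classical
  rw [xMono_split v l u hmin]
  rw [xMono_split v (Function.update l u (l u - 1)) u
    (fun s hs => by rw [Function.update_of_ne (ne_of_lt hs)]; exact hmin s hs)]
  rw [Function.update_idem, Function.update_self, ← mul_assoc, ← pow_succ']
  congr 2
  omega

lemma xMono_mul {n : ℕ} {R : Type} [Ring R] (v : Fin n → R) (l : Fin n → ℕ) (t : Fin n)
    (hmin : ∀ s, s < t → l s = 0) :
    v t * xMono v l = xMono v (Function.update l t (l t + 1)) := by
  classical
  rw [xMono_cons v (Function.update l t (l t + 1)) t
    (fun s hs => by rw [Function.update_of_ne (ne_of_lt hs)]; exact hmin s hs)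
    (by rw [Function.update_self]; omega)]
  rw [Function.update_self, Function.update_idem, Nat.add_sub_cancel, Function.update_eq_self]

lemma xMono_single {n : ℕ} {R : Type} [Ring R] (v : Fin n → R) (t : Fin n) :
    xMono v (Function.update (0 : Fin n → ℕ) t 1) = v t := by
  classical
  have h1 : Function.update (0 : Fin n → ℕ) t 1
      = Function.update (0 : Fin n → ℕ) t ((0 : Fin n → ℕ) t + 1) := by simp
  rw [h1, ← xMono_mul v 0 t (fun s _ => rfl), xMono_zero, mul_one]

end Helpers

/-- Assume `char k = 2` or every `|x_i|` is even, so that `R^e` is a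
free right `R`-module with basis `𝔠 = {y_1^{l_1} ⋯ y_n^{l_n}}`.  Then in the (unique)
expansion `y_1^{j_1} ⋯ y_n^{j_n} h_R(x_1^{i_1} ⋯ x_n^{i_n}) = ∑_{Y ∈ 𝔠} Y a_Y` with
`a_Y ∈ R`, the coefficient `a_1` of the empty monomial is zero. -/
theorem stmt17 (k R E : Type) [Field k] [Ring R] [Algebra k R] [Ring E] [Algebra k E]
    (n : ℕ) (𝒜 : ℤ → Submodule k R) [GradedAlgebra 𝒜]
    (ℰ : ℤ → Submodule k E) [GradedAlgebra ℰ]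
    (P : DGPoissonAlgebra k R 𝒜)
    (x : Fin n → R) (w : Fin n → ℤ) (hx : ∀ i, x i ∈ 𝒜 (w i))
    (hgen : Algebra.adjoin k (Set.range x) = ⊤)
    (hchar : ringChar k = 2 ∨ ∀ i, Even (w i))
    (hbasis : LinearIndependent k (fun e : Fin n → ℕ => xMono x e) ∧
      Submodule.span k (Set.range fun e : Fin n → ℕ => xMono x e) = ⊤)
    (DE : DGAlgebra k E ℰ) (mR : R →ₐ[k] E) (hR : R →ₗ[k] E)
    (hUEA : IsUEA k 𝒜 ℰ P DE mR hR)
    -- `R^e` is a free right `R`-module with basis `𝔠`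
    (hfree_ind : ∀ c : (Fin n → ℕ) →₀ R,
      (c.sum fun l r => xMono (fun s => hR (x s)) l * mR r) = 0 → c = 0)
    (hfree_span : ∀ z : E, ∃ c : (Fin n → ℕ) →₀ R,
      z = c.sum fun l r => xMono (fun s => hR (x s)) l * mR r) :
    ∀ (j e : Fin n → ℕ) (c : (Fin n → ℕ) →₀ R),
      (c.sum fun l r => xMono (fun s => hR (x s)) l * mR r) =
          xMono (fun s => hR (x s)) j * hR (xMono x e) →
      c 0 = 0 := by
  classical
  set yv : Fin n → E := fun s => hR (x s) with hyv
  have hyvt : ∀ s, hR (x s) = yv s := fun s => rfl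
  set Y : (Fin n → ℕ) → E := fun l => xMono yv l with hYdef
  have hYapp : ∀ l, Y l = xMono yv l := fun l => rfl
  have hY0 : Y (0 : Fin n → ℕ) = 1 := xMono_zero yv
  obtain ⟨⟨hDG, hgmem, hgd, gbr, fbr, gmul⟩, -⟩ := hUEA
  have hGw : ∀ t, Even (w t) ∨ ringChar k = 2 := by
    rcases hchar with h | h
    · exact fun t => Or.inr h
    · exact fun t => Or.inl (h t)
  -- degrees of monomials
  have hpow : ∀ (t : Fin n) (m : ℕ), ∃ d, x t ^ m ∈ 𝒜 d ∧ (Even d ∨ ringChar k = 2) := by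
    intro t m; induction m with
    | zero => exact ⟨0, by simpa using SetLike.GradedOne.one_mem, Or.inl Even.zero⟩
    | succ m ih =>
      obtain ⟨d, hd, hgood⟩ := ih
      refine ⟨d + w t, ?_, ?_⟩
      · rw [pow_succ]; exact SetLike.mul_mem_graded hd (hx t)
      · rcases hgood with h | h
        · rcases hGw t with h' | h'
          · exact Or.inl (h.add h')
          · exact Or.inr h'
        · exact Or.inr h
  have hlistdeg : ∀ L : List R, (∀ a ∈ L, ∃ d, a ∈ 𝒜 d ∧ (Even d ∨ ringChar k = 2)) →
      ∃ d, L.prod ∈ 𝒜 d ∧ (Even d ∨ ringChar k = 2) := by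
    intro L; induction L with
    | nil => exact fun _ => ⟨0, by simpa using SetLike.GradedOne.one_mem, Or.inl Even.zero⟩
    | cons a L ih =>
      intro hmem
      obtain ⟨d1, h1, g1⟩ := hmem a (List.mem_cons_self)
      obtain ⟨d2, h2, g2⟩ := ih (fun b hb => hmem b (List.mem_cons_of_mem a hb))
      refine ⟨d1 + d2, by rw [List.prod_cons]; exact SetLike.mul_mem_graded h1 h2, ?_⟩
      rcases g1 with h | h
      · rcases g2 with h' | h'
        · exact Or.inl (h.add h')
        · exact Or.inr h'
      · exact Or.inr h
  have hMonoDeg : ∀ e : Fin n → ℕ, ∃ d, xMono x e ∈ 𝒜 d ∧ (Even d ∨ ringChar k = 2) := by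
    intro e
    apply hlistdeg
    intro a ha
    obtain ⟨t, _, rfl⟩ := List.mem_map.1 ha
    exact hpow t (e t)
  have h1R : (1 : R) ∈ 𝒜 0 := SetLike.GradedOne.one_mem
  have hhR1 : hR (1 : R) = 0 := by
    have h := gmul h1R h1R
    rw [sgn_smul_eq (k := k) (Or.inl Even.zero), mul_one] at h
    simp only [map_one, one_mul] at h
    exact (add_eq_left.mp h.symm)
  have hbr1 : ∀ t, P.br (x t) (1 : R) = 0 := by
    intro t
    have h := P.leibniz (hx t) h1R h1R
    rw [mul_one, sgn_smul_eq (hGw t), one_mul, mul_one] at h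
    exact (add_eq_left.mp h.symm)
  -- commutation of y's with mR
  have hS2 : ∀ (t : Fin n) (r : R), yv t * mR r = mR r * yv t + mR (P.br (x t) r) := by
    intro t r
    have hsp : r ∈ Submodule.span k {b : R | ∃ i, b ∈ 𝒜 i} := by
      rw [← DirectSum.sum_support_decompose 𝒜 r]
      exact Submodule.sum_mem _ fun i _ =>
        Submodule.subset_span ⟨i, (DirectSum.decompose 𝒜 r i).2⟩
    let L : R →ₗ[k] E :=
      (LinearMap.mulLeft k (yv t)).comp mR.toLinearMap -
      (LinearMap.mulRight k (yv t)).comp mR.toLinearMap -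
      mR.toLinearMap.comp (P.br (x t))
    have hker : Submodule.span k {b : R | ∃ i, b ∈ 𝒜 i} ≤ LinearMap.ker L := by
      rw [Submodule.span_le]
      rintro b ⟨i, hb⟩
      have h := fbr (hx t) hb
      rw [sgn_smul_eq (hGw t)] at h
      simp only [SetLike.mem_coe, LinearMap.mem_ker, L, LinearMap.sub_apply,
        LinearMap.comp_apply, LinearMap.mulLeft_apply, LinearMap.mulRight_apply,
        AlgHom.toLinearMap_apply]
      rw [hyvt t] at h
      rw [h]
      abel
    have h0 := hker hsp
    rw [LinearMap.mem_ker] at h0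
    simp only [L, LinearMap.sub_apply, LinearMap.comp_apply, LinearMap.mulLeft_apply,
      LinearMap.mulRight_apply, AlgHom.toLinearMap_apply] at h0
    have h1 := sub_eq_zero.1 h0
    rw [sub_eq_iff_eq_add] at h1
    rw [h1]
    abel
  have hS2' : ∀ (t : Fin n) (a : R), mR a * yv t = yv t * mR a - mR (P.br (x t) a) := by
    intro t a
    rw [hS2 t a, add_sub_cancel_right]
  have hS3 : ∀ t s, yv t * yv s = yv s * yv t + hR (P.br (x t) (x s)) := by
    intro t s
    have h := gbr (hx t) (hx s)
    rw [sgn_smul_eq (hGw t)] at h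
    rw [hyvt t, hyvt s] at h
    rw [h]
    abel
  -- min support
  have hmin : ∀ l : Fin n → ℕ, l ≠ 0 → ∃ u : Fin n, 0 < l u ∧ ∀ s, s < u → l s = 0 := by
    intro l hl
    have hne : (Finset.univ.filter fun s => l s ≠ 0).Nonempty := by
      rcases Function.ne_iff.1 hl with ⟨s, hs⟩
      exact ⟨s, Finset.mem_filter.2 ⟨Finset.mem_univ s, hs⟩⟩
    refine ⟨(Finset.univ.filter fun s => l s ≠ 0).min' hne, ?_, ?_⟩
    · have h := Finset.min'_mem _ hne
      rw [Finset.mem_filter] at h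
      exact Nat.pos_of_ne_zero h.2
    · intro s hs
      by_contra hns
      have : (Finset.univ.filter fun s => l s ≠ 0).min' hne ≤ s :=
        Finset.min'_le _ s (Finset.mem_filter.2 ⟨Finset.mem_univ s, hns⟩)
      exact absurd hs (not_lt.2 this)
  have hsumupd : ∀ (l : Fin n → ℕ) (u : Fin n), 0 < l u →
      (∑ s, Function.update l u (l u - 1) s) = (∑ s, l s) - 1 ∧ 0 < ∑ s, l s := by
    intro l u hu
    have h1 : ∑ s, Function.update l u (l u - 1) s
        = (l u - 1) + ∑ s ∈ Finset.univ \ {u}, l s :=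
      Finset.sum_update_of_mem (Finset.mem_univ u) l (l u - 1)
    have h2 : ∑ s, l s = l u + ∑ s ∈ Finset.univ \ {u}, l s := by
      have h := Finset.sum_update_of_mem (Finset.mem_univ u) l (l u)
      rwa [Function.update_eq_self] at h
    exact ⟨by omega, by omega⟩
  have hsum_single : ∀ t : Fin n, (∑ s, Function.update (0 : Fin n → ℕ) t 1 s) = 1 := by
    intro t
    rw [Finset.sum_update_of_mem (Finset.mem_univ t)]
    simp
  have hne_single : ∀ t : Fin n, Function.update (0 : Fin n → ℕ) t 1 ≠ 0 := by
    intro t h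
    have := congrFun h t
    simp at this
  -- claim C : explicit form of hR on monomials, with chain rule
  have claimC : ∀ (m : ℕ) (e : Fin n → ℕ), (∑ s, e s) ≤ m →
      ∃ cc : Fin n → R, hR (xMono x e) = ∑ r, yv r * mR (cc r) ∧
        ∀ t, P.br (x t) (xMono x e) = ∑ r, P.br (x t) (x r) * cc r := by
    intro m
    induction m using Nat.strong_induction_on with
    | _ m ihm =>
    intro e he
    by_cases he0 : e = 0
    · subst he0
      refine ⟨0, ?_, ?_⟩
      · simp [xMono_zero, hhR1]
      · intro t; simp [xMono_zero, hbr1 t]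
    · obtain ⟨u, hu, humin⟩ := hmin e he0
      obtain ⟨hsum', hpos⟩ := hsumupd e u hu
      have hsplit : xMono x e = x u * xMono x (Function.update e u (e u - 1)) :=
        xMono_cons x e u humin hu
      obtain ⟨cc', hhR', hbr'⟩ := ihm (m - 1) (by omega) (Function.update e u (e u - 1)) (by omega)
      obtain ⟨d', hd', hgood'⟩ := hMonoDeg (Function.update e u (e u - 1))
      have hprod := gmul (hx u) hd'
      rw [sgn_smul_eq (hGw u), hyvt u] at hprod
      refine ⟨fun r => x u * cc' r +
          (if r = u then xMono x (Function.update e u (e u - 1)) else 0), ?_, ?_⟩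
      · show hR (xMono x e) = ∑ r, yv r * mR (x u * cc' r +
          (if r = u then xMono x (Function.update e u (e u - 1)) else 0))
        rw [hsplit, hprod, hhR', Finset.mul_sum]
        have hterm : ∀ r : Fin n, mR (x u) * (yv r * mR (cc' r)) =
            yv r * mR (x u * cc' r) - mR (P.br (x r) (x u) * cc' r) := by
          intro r
          rw [← mul_assoc, hS2' r (x u), sub_mul, mul_assoc, ← map_mul, ← map_mul]
        rw [Finset.sum_congr rfl (fun r _ => hterm r), Finset.sum_sub_distrib]
        rw [hS2' u (xMono x (Function.update e u (e u - 1)))]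
        have hanti : ∀ r : Fin n, P.br (x r) (x u) = - P.br (x u) (x r) := by
          intro r
          have h := P.antisymm (hx r) (hx u)
          rw [sgn_smul_eq (hGw r)] at h
          exact h
        have hcancel : ∑ r, mR (P.br (x r) (x u) * cc' r)
            = - mR (P.br (x u) (xMono x (Function.update e u (e u - 1)))) := by
          calc ∑ r, mR (P.br (x r) (x u) * cc' r)
              = ∑ r, - mR (P.br (x u) (x r) * cc' r) := by
                exact Finset.sum_congr rfl fun r _ => by rw [hanti r, neg_mul, map_neg]
            _ = - mR (∑ r, P.br (x u) (x r) * cc' r) := by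
                rw [Finset.sum_neg_distrib, ← map_sum]
            _ = - mR (P.br (x u) (xMono x (Function.update e u (e u - 1)))) := by
                rw [← hbr' u]
        rw [hcancel]
        have hRHS : ∑ r, yv r * mR (x u * cc' r +
            (if r = u then xMono x (Function.update e u (e u - 1)) else 0)) =
            (∑ r, yv r * mR (x u * cc' r)) +
              yv u * mR (xMono x (Function.update e u (e u - 1))) := by
          simp only [map_add, mul_add, Finset.sum_add_distrib]
          congr 1
          calc ∑ r, yv r * mR (if r = u then xMono x (Function.update e u (e u - 1)) else 0)
              = ∑ r, (if r = u then yv r * mR (xMono x (Function.update e u (e u - 1))) else 0) := by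
                exact Finset.sum_congr rfl fun r _ => by by_cases h : r = u <;> simp [h]
            _ = yv u * mR (xMono x (Function.update e u (e u - 1))) := by
                rw [Finset.sum_ite_eq' Finset.univ u]; simp
        rw [hRHS]
        abel
      · intro t
        show P.br (x t) (xMono x e) = ∑ r, P.br (x t) (x r) * (x u * cc' r +
          (if r = u then xMono x (Function.update e u (e u - 1)) else 0))
        rw [hsplit]
        have hleib := P.leibniz (hx t) (hx u) hd'
        rw [sgn_smul_eq (hGw t)] at hleib
        rw [hleib, hbr' t, Finset.mul_sum]
        have hcomm : ∀ r : Fin n, x u * (P.br (x t) (x r) * cc' r) =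
            P.br (x t) (x r) * (x u * cc' r) := by
          intro r
          have hb : P.br (x t) (x r) ∈ 𝒜 (w t + w r) := P.br_mem (hx t) (hx r)
          have h := P.gcomm (hx u) hb
          rw [sgn_smul_eq (hGw u)] at h
          rw [← mul_assoc, h, mul_assoc]
        rw [Finset.sum_congr rfl fun r _ => hcomm r]
        have hRHS : ∑ r, P.br (x t) (x r) * (x u * cc' r +
            (if r = u then xMono x (Function.update e u (e u - 1)) else 0)) =
            (∑ r, P.br (x t) (x r) * (x u * cc' r)) +
              P.br (x t) (x u) * xMono x (Function.update e u (e u - 1)) := by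
          simp only [mul_add, Finset.sum_add_distrib]
          congr 1
          calc ∑ r, P.br (x t) (x r) *
              (if r = u then xMono x (Function.update e u (e u - 1)) else 0)
              = ∑ r, (if r = u then P.br (x t) (x r) *
                  xMono x (Function.update e u (e u - 1)) else 0) := by
                exact Finset.sum_congr rfl fun r _ => by by_cases h : r = u <;> simp [h]
            _ = P.br (x t) (x u) * xMono x (Function.update e u (e u - 1)) := by
                rw [Finset.sum_ite_eq' Finset.univ u]; simp
        rw [hRHS]
        abel
  -- the submodule N₁ spanned by y_s * mR a, and hR lands in it
  let N₁ : Submodule k E := Submodule.span k {z : E | ∃ (s : Fin n) (a : R), z = yv s * mR a}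
  have spanN₁ : ∀ (T : Submodule k E) (w' : E),
      (∀ s a, (yv s * mR a) * w' ∈ T) → ∀ v ∈ N₁, v * w' ∈ T := by
    intro T w' hgen v hv
    have hle : N₁ ≤ T.comap (LinearMap.mulRight k w') :=
      Submodule.span_le.2 (by rintro z ⟨s, a, rfl⟩; exact hgen s a)
    exact hle hv
  have hA : ∀ b : R, hR b ∈ N₁ := by
    intro b
    have hb : b ∈ Submodule.span k (Set.range fun e : Fin n → ℕ => xMono x e) := by
      rw [hbasis.2]; trivial
    have hle : Submodule.span k (Set.range fun e : Fin n → ℕ => xMono x e)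
        ≤ N₁.comap hR := by
      rw [Submodule.span_le]
      rintro z ⟨e, rfl⟩
      obtain ⟨cc, hcc, -⟩ := claimC (∑ s, e s) e le_rfl
      simp only [SetLike.mem_coe, Submodule.mem_comap]
      rw [hcc]
      exact Submodule.sum_mem _ fun r _ => Submodule.subset_span ⟨r, cc r, rfl⟩
    exact hle hb
  -- the free module machinery
  let Φ : ((Fin n → ℕ) →₀ R) →ₗ[k] E :=
    Finsupp.lsum k fun l => (LinearMap.mulLeft k (Y l)).comp mR.toLinearMap
  have hΦ : ∀ cc : (Fin n → ℕ) →₀ R, Φ cc = cc.sum fun l r => Y l * mR r := fun cc => rfl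
  have hΦsingle : ∀ l r, Φ (Finsupp.single l r) = Y l * mR r := by
    intro l r
    rw [hΦ]
    exact Finsupp.sum_single_index (by simp)
  have hinj : Function.Injective Φ := by
    intro c1 c2 h12
    have hz : Φ (c1 - c2) = 0 := by rw [map_sub, h12, sub_self]
    rw [hΦ] at hz
    exact sub_eq_zero.1 (hfree_ind (c1 - c2) hz)
  have hsurj : Function.Surjective Φ := by
    intro z
    obtain ⟨cc, hz⟩ := hfree_span z
    exact ⟨cc, by rw [hΦ]; exact hz.symm⟩
  let Φe : ((Fin n → ℕ) →₀ R) ≃ₗ[k] E := LinearEquiv.ofBijective Φ ⟨hinj, hsurj⟩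
  let π0 : E →ₗ[k] R :=
    { toFun := fun z => Φe.symm z 0
      map_add' := fun a b => by
        show (Φe.symm (a + b)) 0 = (Φe.symm a) 0 + (Φe.symm b) 0
        rw [map_add]; rfl
      map_smul' := fun m a => by
        show (Φe.symm (m • a)) 0 = (RingHom.id k) m • (Φe.symm a) 0
        rw [map_smul]; rfl }
  have hπ0 : ∀ l r, π0 (Y l * mR r) = if l = 0 then r else 0 := by
    intro l r
    have h1 : Φe.symm (Y l * mR r) = Finsupp.single l r := by
      rw [LinearEquiv.symm_apply_eq]
      exact (hΦsingle l r).symm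
    show Φe.symm (Y l * mR r) 0 = _
    rw [h1, Finsupp.single_apply]
  -- filtration
  let V : ℕ → Submodule k E := fun m =>
    Submodule.span k {z : E | ∃ l : Fin n → ℕ, ∃ r : R, (∑ s, l s) ≤ m ∧ z = Y l * mR r}
  have genV : ∀ (m : ℕ) (l : Fin n → ℕ) (r : R), (∑ s, l s) ≤ m → Y l * mR r ∈ V m :=
    fun m l r h => Submodule.subset_span ⟨l, r, h, rfl⟩
  have Vmono : ∀ {m m' : ℕ}, m ≤ m' → V m ≤ V m' := by
    intro m m' h
    apply Submodule.span_mono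
    rintro z ⟨l, r, hl, rfl⟩
    exact ⟨l, r, le_trans hl h, rfl⟩
  have spanLe : ∀ (m : ℕ) (f : E →ₗ[k] E) (T : Submodule k E),
      (∀ l r, (∑ s, l s) ≤ m → f (Y l * mR r) ∈ T) → ∀ z ∈ V m, f z ∈ T := by
    intro m f T hgen z hz
    have hle : V m ≤ T.comap f :=
      Submodule.span_le.2 (by rintro z' ⟨l, r, hl, rfl⟩; exact hgen l r hl)
    exact hle hz
  -- the filtration lemmas F2 (mR a * ·) and F1 (yv t * ·)
  have F2F1 : ∀ m : ℕ,
      (∀ (a : R) (l : Fin n → ℕ) (r : R), (∑ s, l s) ≤ m → mR a * (Y l * mR r) ∈ V m) ∧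
      (∀ (t : Fin n) (l : Fin n → ℕ) (r : R), (∑ s, l s) ≤ m →
        yv t * (Y l * mR r) ∈ V (m + 1)) := by
    intro m
    induction m using Nat.strong_induction_on with
    | _ m ihm =>
    constructor
    · intro a l r hl
      by_cases hl0 : l = 0
      · subst hl0
        have h : mR a * (Y 0 * mR r) = Y 0 * mR (a * r) := by
          rw [hY0, one_mul, one_mul, map_mul]
        rw [h]
        exact genV m 0 (a * r) (by simp)
      · obtain ⟨u, hu, humin⟩ := hmin l hl0
        obtain ⟨hsum', hpos⟩ := hsumupd l u hu
        have m1 : 1 ≤ m := by omega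
        have hsplitY : Y l = yv u * Y (Function.update l u (l u - 1)) :=
          xMono_cons yv l u humin hu
        have keyeq : mR a * (Y l * mR r) =
            yv u * (mR a * (Y (Function.update l u (l u - 1)) * mR r)) -
            mR (P.br (x u) a) * (Y (Function.update l u (l u - 1)) * mR r) := by
          rw [hsplitY]
          simp only [← mul_assoc]
          rw [hS2' u a, sub_mul, sub_mul]
        rw [keyeq]
        apply Submodule.sub_mem
        · have hin1 : mR a * (Y (Function.update l u (l u - 1)) * mR r) ∈ V (m - 1) :=
            (ihm (m - 1) (by omega)).1 a _ r (by omega)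
          have hpt : ∀ l2 r2, (∑ s, l2 s) ≤ m - 1 → yv u * (Y l2 * mR r2) ∈ V m := by
            intro l2 r2 h2
            have h := (ihm (m - 1) (by omega)).2 u l2 r2 h2
            rwa [show m - 1 + 1 = m by omega] at h
          have h := spanLe (m - 1) (LinearMap.mulLeft k (yv u)) (V m)
            (fun l2 r2 h2 => by simpa using hpt l2 r2 h2) _ hin1
          simpa using h
        · exact Vmono (by omega) ((ihm (m - 1) (by omega)).1 _ _ r (by omega))
    · have inner : ∀ (tv : ℕ) (t : Fin n), t.val ≤ tv →
          ∀ (l : Fin n → ℕ) (r : R), (∑ s, l s) ≤ m → yv t * (Y l * mR r) ∈ V (m + 1) := by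
        intro tv
        induction tv using Nat.strong_induction_on with
        | _ tv ihtv =>
        intro t htv l r hl
        by_cases hl0 : l = 0
        · subst hl0
          have h : yv t * (Y 0 * mR r) = Y (Function.update (0 : Fin n → ℕ) t 1) * mR r := by
            rw [hY0, one_mul,
              (show Y (Function.update (0 : Fin n → ℕ) t 1) = yv t from xMono_single yv t)]
          rw [h]
          exact genV _ _ r (by rw [hsum_single t]; omega)
        · obtain ⟨u, hu, humin⟩ := hmin l hl0
          obtain ⟨hsum', hpos⟩ := hsumupd l u hu
          have m1 : 1 ≤ m := by omega
          by_cases hut : u < t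
          · have hut' : (u : ℕ) < (t : ℕ) := hut
            have hsplitY : Y l = yv u * Y (Function.update l u (l u - 1)) :=
              xMono_cons yv l u humin hu
            have keyeq : yv t * (Y l * mR r) =
                yv u * (yv t * (Y (Function.update l u (l u - 1)) * mR r)) +
                hR (P.br (x t) (x u)) * (Y (Function.update l u (l u - 1)) * mR r) := by
              rw [hsplitY]
              simp only [← mul_assoc]
              rw [hS3 t u, add_mul, add_mul]
            rw [keyeq]
            apply Submodule.add_mem
            · have hinner : yv t * (Y (Function.update l u (l u - 1)) * mR r) ∈ V m := by
                have h := (ihm (m - 1) (by omega)).2 t (Function.update l u (l u - 1)) r (by omega)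
                rwa [show m - 1 + 1 = m by omega] at h
              have hpt : ∀ l2 r2, (∑ s, l2 s) ≤ m → yv u * (Y l2 * mR r2) ∈ V (m + 1) := by
                intro l2 r2 h2
                exact ihtv (t.val - 1) (by omega) u (by omega) l2 r2 h2
              have h := spanLe m (LinearMap.mulLeft k (yv u)) (V (m + 1))
                (fun l2 r2 h2 => by simpa using hpt l2 r2 h2) _ hinner
              simpa using h
            · apply spanN₁ (V (m + 1)) _ ?_ _ (hA (P.br (x t) (x u)))
              intro s a
              have hre : (yv s * mR a) * (Y (Function.update l u (l u - 1)) * mR r) =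
                  yv s * (mR a * (Y (Function.update l u (l u - 1)) * mR r)) := by
                simp only [mul_assoc]
              rw [hre]
              have hmid : mR a * (Y (Function.update l u (l u - 1)) * mR r) ∈ V (m - 1) :=
                (ihm (m - 1) (by omega)).1 a _ r (by omega)
              have hpt : ∀ l2 r2, (∑ s, l2 s) ≤ m - 1 → yv s * (Y l2 * mR r2) ∈ V (m + 1) := by
                intro l2 r2 h2
                have h := (ihm (m - 1) (by omega)).2 s l2 r2 h2
                rw [show m - 1 + 1 = m by omega] at h
                exact Vmono (by omega) h
              have h := spanLe (m - 1) (LinearMap.mulLeft k (yv s)) (V (m + 1))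
                (fun l2 r2 h2 => by simpa using hpt l2 r2 h2) _ hmid
              simpa using h
          · have hmint : ∀ s, s < t → l s = 0 :=
              fun s hs => humin s (lt_of_lt_of_le hs (not_lt.1 hut))
            have h : yv t * (Y l * mR r) = Y (Function.update l t (l t + 1)) * mR r := by
              rw [← mul_assoc, (xMono_mul yv l t hmint : yv t * Y l = _)]
            rw [h]
            apply genV
            rw [Finset.sum_update_of_mem (Finset.mem_univ t)]
            have h2 : ∑ s, l s = l t + ∑ s ∈ Finset.univ \ {t}, l s := by
              have h3 := Finset.sum_update_of_mem (Finset.mem_univ t) l (l t)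
              rwa [Function.update_eq_self] at h3
            omega
      exact fun t l r hl => inner t.val t le_rfl l r hl
  -- key vanishing lemma
  have key : ∀ (m : ℕ) (t : Fin n) (l : Fin n → ℕ) (r : R),
      (∑ s, l s) ≤ m → π0 (yv t * (Y l * mR r)) = 0 := by
    intro m
    induction m using Nat.strong_induction_on with
    | _ m ihm =>
    have inner : ∀ (tv : ℕ) (t : Fin n), t.val ≤ tv →
        ∀ (l : Fin n → ℕ) (r : R), (∑ s, l s) ≤ m → π0 (yv t * (Y l * mR r)) = 0 := by
      intro tv
      induction tv using Nat.strong_induction_on with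
      | _ tv ihtv =>
      intro t htv l r hl
      by_cases hl0 : l = 0
      · subst hl0
        have h : yv t * (Y 0 * mR r) = Y (Function.update (0 : Fin n → ℕ) t 1) * mR r := by
          rw [hY0, one_mul,
            (show Y (Function.update (0 : Fin n → ℕ) t 1) = yv t from xMono_single yv t)]
        rw [h, hπ0, if_neg (hne_single t)]
      · obtain ⟨u, hu, humin⟩ := hmin l hl0
        obtain ⟨hsum', hpos⟩ := hsumupd l u hu
        have m1 : 1 ≤ m := by omega
        by_cases hut : u < t
        · have hut' : (u : ℕ) < (t : ℕ) := hut
          have hsplitY : Y l = yv u * Y (Function.update l u (l u - 1)) :=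
            xMono_cons yv l u humin hu
          have keyeq : yv t * (Y l * mR r) =
              yv u * (yv t * (Y (Function.update l u (l u - 1)) * mR r)) +
              hR (P.br (x t) (x u)) * (Y (Function.update l u (l u - 1)) * mR r) := by
            rw [hsplitY]
            simp only [← mul_assoc]
            rw [hS3 t u, add_mul, add_mul]
          rw [keyeq, map_add]
          have h1 : π0 (yv u * (yv t * (Y (Function.update l u (l u - 1)) * mR r))) = 0 := by
            have hinner : yv t * (Y (Function.update l u (l u - 1)) * mR r) ∈ V m := by
              have h := (F2F1 (m - 1)).2 t (Function.update l u (l u - 1)) r (by omega)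
              rwa [show m - 1 + 1 = m by omega] at h
            have hpt : ∀ l2 r2, (∑ s, l2 s) ≤ m → π0 (yv u * (Y l2 * mR r2)) = 0 :=
              fun l2 r2 h2 => ihtv (t.val - 1) (by omega) u (by omega) l2 r2 h2
            have h := spanLe m (LinearMap.mulLeft k (yv u)) (LinearMap.ker π0)
              (fun l2 r2 h2 => by
                simp only [LinearMap.mulLeft_apply, LinearMap.mem_ker]
                exact hpt l2 r2 h2) _ hinner
            simpa using h
          have h2 : π0 (hR (P.br (x t) (x u)) *
              (Y (Function.update l u (l u - 1)) * mR r)) = 0 := by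
            have h := spanN₁ (LinearMap.ker π0) (Y (Function.update l u (l u - 1)) * mR r)
              ?_ _ (hA (P.br (x t) (x u)))
            · simpa using h
            · intro s a
              simp only [LinearMap.mem_ker]
              have hre : (yv s * mR a) * (Y (Function.update l u (l u - 1)) * mR r) =
                  yv s * (mR a * (Y (Function.update l u (l u - 1)) * mR r)) := by
                simp only [mul_assoc]
              rw [hre]
              have hmid : mR a * (Y (Function.update l u (l u - 1)) * mR r) ∈ V (m - 1) :=
                (F2F1 (m - 1)).1 a _ r (by omega)
              have h := spanLe (m - 1) (LinearMap.mulLeft k (yv s)) (LinearMap.ker π0)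
                (fun l2 r2 h2 => by
                  simp only [LinearMap.mulLeft_apply, LinearMap.mem_ker]
                  exact ihm (m - 1) (by omega) s l2 r2 h2) _ hmid
              simpa using h
          rw [h1, h2, add_zero]
        · have hmint : ∀ s, s < t → l s = 0 :=
            fun s hs => humin s (lt_of_lt_of_le hs (not_lt.1 hut))
          have h : yv t * (Y l * mR r) = Y (Function.update l t (l t + 1)) * mR r := by
            rw [← mul_assoc, (xMono_mul yv l t hmint : yv t * Y l = _)]
          rw [h, hπ0, if_neg ?_]
          intro hcon
          have := congrFun hcon t
          simp at this
    exact fun t l r hl => inner t.val t le_rfl l r hl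
  have L2 : ∀ (t : Fin n) (z : E), π0 (yv t * z) = 0 := by
    intro t z
    obtain ⟨m, hm⟩ : ∃ m, z ∈ V m := by
      obtain ⟨cc, hz⟩ := hfree_span z
      refine ⟨cc.support.sup fun l => ∑ s, l s, ?_⟩
      rw [hz]
      exact Submodule.sum_mem _ fun l hl => genV _ l (cc l) (Finset.le_sup hl)
    have h := spanLe m (LinearMap.mulLeft k (yv t)) (LinearMap.ker π0)
      (fun l2 r2 h2 => by
        simp only [LinearMap.mulLeft_apply, LinearMap.mem_ker]
        exact key m t l2 r2 h2) _ hm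
    simpa using h
  -- conclusion
  intro j e c hc
  have hc0 : c 0 = π0 (Φ c) := by
    show c 0 = Φe.symm (Φ c) 0
    have h : Φ c = Φe c := rfl
    rw [h, LinearEquiv.symm_apply_apply]
  have hΦc : Φ c = Y j * hR (xMono x e) := by rw [hΦ]; exact hc
  rw [hc0, hΦc]
  by_cases hj : j = 0
  · subst hj
    rw [hY0, one_mul]
    have hle : N₁ ≤ LinearMap.ker π0 := by
      apply Submodule.span_le.2
      rintro z ⟨s, a, rfl⟩
      simp only [SetLike.mem_coe, LinearMap.mem_ker]
      exact L2 s (mR a)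
    have := hle (hA (xMono x e))
    rwa [LinearMap.mem_ker] at this
  · obtain ⟨u, hu, humin⟩ := hmin j hj
    have hsplitY : Y j = yv u * Y (Function.update j u (j u - 1)) :=
      xMono_cons yv j u humin hu
    rw [hsplitY, mul_assoc]
    exact L2 u _
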